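/- Let s ∈ (0,1). For every u ∈ C^1_c(ℝ^N), the Gagliardo seminorm satisfies the interpolation inequality [u]_{W^{s,1}(ℝ^N)} ≤ (2^{1-s} N ω_N / ((1-s) s)) · (∫_{ℝ^N} |∇u| dx)^s · (∫_{ℝ^N} |u| dx)^{1-s}. -/

import Mathlib

open MeasureTheory Metric Set
open scoped ENNReal

local notation "dim" => Module.finrank ℝ

lemma lintegral_fun_norm_addHaar' {E : Type*} [NormedAddCommGroup E] [NormedSpace ℝ E]
    [MeasurableSpace E] [BorelSpace E] [Nontrivial E] [FiniteDimensional ℝ E]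
    (μ : Measure E) [μ.IsAddHaarMeasure] (f : ℝ → ℝ≥0∞) (hf : Measurable f) :
    ∫⁻ x, f ‖x‖ ∂μ = (dim E : ℝ≥0∞) * μ (ball 0 1) *
      ∫⁻ y in Ioi (0 : ℝ), ENNReal.ofReal (y ^ (dim E - 1)) * f y := by
  have hm : Measurable fun p : sphere (0 : E) 1 × Ioi (0 : ℝ) ↦ f p.2 :=
    (hf.comp measurable_subtype_coe).comp measurable_snd
  calc
    ∫⁻ x, f ‖x‖ ∂μ = ∫⁻ x : ({(0)}ᶜ : Set E), f ‖x.1‖ ∂(μ.comap (↑)) := by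
      rw [lintegral_subtype_comap (measurableSet_singleton _).compl fun x ↦ f ‖x‖,
        MeasureTheory.restrict_compl_singleton]
    _ = ∫⁻ p : sphere (0 : E) 1 × Ioi (0 : ℝ), f p.2
          ∂μ.toSphere.prod (.volumeIoiPow (dim E - 1)) :=
      by
        rw [← μ.measurePreserving_homeomorphUnitSphereProd.lintegral_comp_emb
          (Homeomorph.measurableEmbedding _) fun p ↦ f p.2]
        simp [homeomorphUnitSphereProd]
    _ = μ.toSphere univ * ∫⁻ y : Ioi (0:ℝ), f y ∂(Measure.volumeIoiPow (dim E - 1)) := by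
      rw [MeasureTheory.lintegral_prod _ hm.aemeasurable]
      simp [lintegral_const, mul_comm]
    _ = _ := by
      rw [Measure.toSphere_apply_univ, Measure.volumeIoiPow,
        lintegral_withDensity_eq_lintegral_mul _
          ((measurable_subtype_coe.pow_const _).ennreal_ofReal)
          (by exact hf.comp measurable_subtype_coe : Measurable fun y : Ioi (0:ℝ) ↦ f ↑y)]
      simp only [Pi.mul_apply]
      rw [lintegral_subtype_comap measurableSet_Ioi (fun r : ℝ ↦ ENNReal.ofReal (r ^ (dim E - 1)) * f r)]

variable {N : ℕ}

lemma aux_ftc (u : EuclideanSpace ℝ (Fin N) → ℝ) (hu : ContDiff ℝ 1 u)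
    (x h : EuclideanSpace ℝ (Fin N)) :
    |u (x + h) - u x| ≤ ∫ t in (0:ℝ)..1, ‖fderiv ℝ u (x + t • h)‖ * ‖h‖ := by
  have hd : ∀ t : ℝ, HasDerivAt (fun t : ℝ ↦ u (x + t • h)) ((fderiv ℝ u (x + t • h)) h) t := by
    intro t
    have h1 : HasDerivAt (fun t : ℝ ↦ x + t • h) h t := by
      simpa using ((hasDerivAt_id t).smul_const h).const_add x
    exact ((hu.differentiable one_ne_zero (x + t • h)).hasFDerivAt).comp_hasDerivAt t h1
  have hcont : Continuous fun t : ℝ ↦ (fderiv ℝ u (x + t • h)) h := by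
    exact ((hu.continuous_fderiv one_ne_zero).comp (by continuity)).clm_apply continuous_const
  have key : u (x + h) - u x = ∫ t in (0:ℝ)..1, (fderiv ℝ u (x + t • h)) h := by
    have := intervalIntegral.integral_eq_sub_of_hasDerivAt
      (f := fun t : ℝ ↦ u (x + t • h)) (fun t _ ↦ hd t) (hcont.intervalIntegrable 0 1)
    simp at this
    rw [this]
  rw [key]
  calc |∫ t in (0:ℝ)..1, (fderiv ℝ u (x + t • h)) h|
      ≤ ∫ t in (0:ℝ)..1, ‖(fderiv ℝ u (x + t • h)) h‖ := by
        simpa using intervalIntegral.norm_integral_le_integral_norm (f := fun t : ℝ ↦ (fderiv ℝ u (x + t • h)) h) zero_le_one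
    _ ≤ ∫ t in (0:ℝ)..1, ‖fderiv ℝ u (x + t • h)‖ * ‖h‖ := by
        apply intervalIntegral.integral_mono_on zero_le_one (hcont.norm.intervalIntegrable 0 1)
        · exact (((hu.continuous_fderiv one_ne_zero).comp (by continuity)).norm.mul continuous_const).intervalIntegrable 0 1
        · exact fun t _ ↦ (fderiv ℝ u (x + t • h)).le_opNorm h

lemma aux_grad_bound (u : EuclideanSpace ℝ (Fin N) → ℝ) (hu : ContDiff ℝ 1 u)
    (hcs : HasCompactSupport u) (h : EuclideanSpace ℝ (Fin N)) :
    ∫⁻ x, ENNReal.ofReal |u (x + h) - u x| ≤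
      ENNReal.ofReal ((∫ x, ‖fderiv ℝ u x‖) * ‖h‖) := by
  have hdc : Continuous (fderiv ℝ u) := hu.continuous_fderiv one_ne_zero
  have hint : Integrable (fun x ↦ ‖fderiv ℝ u x‖) :=
    (hdc.integrable_of_hasCompactSupport (hcs.fderiv (𝕜 := ℝ))).norm
  calc ∫⁻ x, ENNReal.ofReal |u (x + h) - u x|
      ≤ ∫⁻ x, ENNReal.ofReal (∫ t in (0:ℝ)..1, ‖fderiv ℝ u (x + t • h)‖ * ‖h‖) :=
        lintegral_mono fun x ↦ ENNReal.ofReal_le_ofReal (aux_ftc u hu x h)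
    _ = ∫⁻ x, ∫⁻ t in Ioc (0:ℝ) 1, ENNReal.ofReal (‖fderiv ℝ u (x + t • h)‖ * ‖h‖) := by
        refine lintegral_congr fun x ↦ ?_
        rw [intervalIntegral.integral_of_le zero_le_one,
          ofReal_integral_eq_lintegral_ofReal]
        · exact ((hdc.comp (by continuity)).norm.mul continuous_const).integrableOn_Ioc
        · filter_upwards with t using by positivity
    _ = ∫⁻ t in Ioc (0:ℝ) 1, ∫⁻ x, ENNReal.ofReal (‖fderiv ℝ u (x + t • h)‖ * ‖h‖) := by
        apply lintegral_lintegral_swap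
        apply Measurable.aemeasurable
        apply Measurable.ennreal_ofReal
        have : Continuous fun p : EuclideanSpace ℝ (Fin N) × ℝ ↦
            ‖fderiv ℝ u (p.1 + p.2 • h)‖ * ‖h‖ := by
          exact ((hdc.comp (by fun_prop)).norm.mul continuous_const)
        exact this.measurable
    _ = ∫⁻ t in Ioc (0:ℝ) 1, ENNReal.ofReal ((∫ x, ‖fderiv ℝ u x‖) * ‖h‖) := by
        refine setLIntegral_congr_fun measurableSet_Ioc ?_
        intro t _
        dsimp only
        rw [lintegral_add_right_eq_self (fun x ↦ ENNReal.ofReal (‖fderiv ℝ u x‖ * ‖h‖)) (t • h),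
          ← ofReal_integral_eq_lintegral_ofReal (hint.mul_const ‖h‖)
            (by filter_upwards with x using by positivity), integral_mul_const]
    _ ≤ ENNReal.ofReal ((∫ x, ‖fderiv ℝ u x‖) * ‖h‖) := by
        rw [setLIntegral_const, Real.volume_Ioc]
        simp

lemma aux_u_bound (u : EuclideanSpace ℝ (Fin N) → ℝ) (hu : ContDiff ℝ 1 u)
    (hcs : HasCompactSupport u) (h : EuclideanSpace ℝ (Fin N)) :
    ∫⁻ x, ENNReal.ofReal |u (x + h) - u x| ≤ ENNReal.ofReal (2 * ∫ x, |u x|) := by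
  have hint : Integrable (fun x ↦ |u x|) :=
    (hu.continuous.integrable_of_hasCompactSupport hcs).abs
  have hm : Measurable fun x ↦ ENNReal.ofReal |u x| :=
    (hu.continuous.abs.measurable).ennreal_ofReal
  calc ∫⁻ x, ENNReal.ofReal |u (x + h) - u x|
      ≤ ∫⁻ x, (ENNReal.ofReal |u (x + h)| + ENNReal.ofReal |u x|) := by
        refine lintegral_mono fun x ↦ ?_
        rw [← ENNReal.ofReal_add (abs_nonneg _) (abs_nonneg _)]
        exact ENNReal.ofReal_le_ofReal (abs_sub _ _)
    _ = (∫⁻ x, ENNReal.ofReal |u (x + h)|) + ∫⁻ x, ENNReal.ofReal |u x| :=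
        lintegral_add_right _ hm
    _ = ENNReal.ofReal (2 * ∫ x, |u x|) := by
        rw [lintegral_add_right_eq_self (fun x ↦ ENNReal.ofReal |u x|) h,
          ← ofReal_integral_eq_lintegral_ofReal hint
            (by filter_upwards with x using abs_nonneg _), ← ENNReal.ofReal_add
            (by positivity) (by positivity), two_mul]

lemma aux_calc {A B s : ℝ} (hA : 0 < A) (hB : 0 < B) (hs0 : 0 < s) (hs1 : s < 1) :
    A * ((2*B/A) ^ (1-s) / (1-s)) + 2*B*((2*B/A) ^ (-s) / s) =
      2 ^ (1-s) * A ^ s * B ^ (1-s) / ((1-s)*s) := by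
  have h2B : (0:ℝ) < 2*B := by linarith
  have hX : (0:ℝ) < A ^ s := Real.rpow_pos_of_pos hA s
  have hY : (0:ℝ) < A ^ (1-s) := Real.rpow_pos_of_pos hA _
  have hU : (0:ℝ) < (2*B) ^ s := Real.rpow_pos_of_pos h2B s
  have hV : (0:ℝ) < (2*B) ^ (1-s) := Real.rpow_pos_of_pos h2B _
  have hXY : A ^ s * A ^ (1-s) = A := by
    rw [← Real.rpow_add hA]; norm_num
  have hUV : (2*B) ^ s * (2*B) ^ (1-s) = 2*B := by
    rw [← Real.rpow_add h2B]; norm_num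
  have h1 : (2*B/A) ^ (1-s) = (2*B) ^ (1-s) / A ^ (1-s) :=
    Real.div_rpow h2B.le hA.le _
  have h2 : (2*B/A) ^ (-s) = A ^ s / (2*B) ^ s := by
    rw [Real.div_rpow h2B.le hA.le, Real.rpow_neg h2B.le, Real.rpow_neg hA.le,
      inv_div_inv]
  have hAY : A / A ^ (1-s) = A ^ s := by
    rw [div_eq_iff hY.ne']; exact hXY.symm
  have hBU : (2*B) / (2*B) ^ s = (2*B) ^ (1-s) := by
    rw [div_eq_iff hU.ne']; linear_combination -hUV
  have t1 : A * ((2*B/A) ^ (1-s) / (1-s)) = A ^ s * (2*B) ^ (1-s) / (1-s) := by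
    rw [h1, ← hAY]; ring
  have t2 : 2*B*((2*B/A) ^ (-s) / s) = A ^ s * (2*B) ^ (1-s) / s := by
    rw [h2, ← hBU]; ring
  have h3 : (2:ℝ) ^ (1-s) * A ^ s * B ^ (1-s) = A ^ s * (2*B) ^ (1-s) := by
    rw [Real.mul_rpow (by norm_num) hB.le]; ring
  rw [t1, t2, h3]
  have hs1' : (1:ℝ) - s ≠ 0 := by linarith
  field_simp
  ring

theorem gagliardo_interpolation {N : ℕ} (s : ℝ) (hs : s ∈ Set.Ioo (0 : ℝ) 1)
    (u : EuclideanSpace ℝ (Fin N) → ℝ) (hu : ContDiff ℝ 1 u)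
    (hcs : HasCompactSupport u) :
    ∫⁻ x, ∫⁻ y, ENNReal.ofReal (|u x - u y| / ‖x - y‖ ^ ((N : ℝ) + s)) ≤
      ENNReal.ofReal ((2 : ℝ) ^ (1 - s) * (N : ℝ) *
        (volume (Metric.ball (0 : EuclideanSpace ℝ (Fin N)) 1)).toReal / ((1 - s) * s) *
        (∫ x, ‖fderiv ℝ u x‖) ^ s * (∫ x, |u x|) ^ (1 - s)) := by
  obtain ⟨hs0, hs1⟩ := hs
  rcases Nat.eq_zero_or_pos N with hN | hN
  · -- trivial case N = 0
    subst hN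
    haveI : Subsingleton (EuclideanSpace ℝ (Fin 0)) := ⟨fun a b ↦ by ext i; exact i.elim0⟩
    have hz : ∀ x y : EuclideanSpace ℝ (Fin 0),
        ENNReal.ofReal (|u x - u y| / ‖x - y‖ ^ ((0:ℕ) + s : ℝ)) = 0 := by
      intro x y
      rw [Subsingleton.elim y x]
      simp
    refine le_trans (le_of_eq ?_) zero_le
    simp only [hz, lintegral_zero]
  -- main case
  set A : ℝ := ∫ x, ‖fderiv ℝ u x‖ with hA_def
  set B : ℝ := ∫ x, |u x| with hB_def
  have hA0 : 0 ≤ A := integral_nonneg fun x ↦ norm_nonneg _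
  have hB0 : 0 ≤ B := integral_nonneg fun x ↦ abs_nonneg _
  set p : ℝ := (N : ℝ) + s with hp_def
  have hp0 : 0 < p := by positivity
  -- Step I : reduce to a radial integral
  have step1 : ∫⁻ x, ∫⁻ y, ENNReal.ofReal (|u x - u y| / ‖x - y‖ ^ p) ≤
      ∫⁻ h : EuclideanSpace ℝ (Fin N),
        ENNReal.ofReal (min (A * ‖h‖) (2 * B) / ‖h‖ ^ p) := by
    have e1 : ∫⁻ x, ∫⁻ y, ENNReal.ofReal (|u x - u y| / ‖x - y‖ ^ p) =
        ∫⁻ x, ∫⁻ h : EuclideanSpace ℝ (Fin N),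
          ENNReal.ofReal (|u (x + h) - u x| / ‖h‖ ^ p) := by
      refine lintegral_congr fun x ↦ ?_
      rw [← lintegral_add_left_eq_self
        (fun y ↦ ENNReal.ofReal (|u x - u y| / ‖x - y‖ ^ p)) x]
      refine lintegral_congr fun h ↦ ?_
      have hxh : x - (x + h) = -h := by abel
      rw [hxh, norm_neg, abs_sub_comm]
    have hmeas : Measurable (Function.uncurry fun x h : EuclideanSpace ℝ (Fin N) ↦
        ENNReal.ofReal (|u (x + h) - u x| / ‖h‖ ^ p)) := by
      apply Measurable.ennreal_ofReal
      apply Measurable.div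
      · exact ((hu.continuous.comp (continuous_fst.add continuous_snd)).sub
          (hu.continuous.comp continuous_fst)).abs.measurable
      · exact ((continuous_norm.comp continuous_snd).measurable).pow measurable_const
    have e2 : ∫⁻ x, ∫⁻ h : EuclideanSpace ℝ (Fin N),
          ENNReal.ofReal (|u (x + h) - u x| / ‖h‖ ^ p) =
        ∫⁻ h : EuclideanSpace ℝ (Fin N), ∫⁻ x,
          ENNReal.ofReal (|u (x + h) - u x| / ‖h‖ ^ p) :=
      lintegral_lintegral_swap hmeas.aemeasurable
    rw [e1, e2]
    refine lintegral_mono fun h ↦ ?_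
    rcases eq_or_ne h 0 with rfl | hh
    · have hz : ∀ x : EuclideanSpace ℝ (Fin N),
          ENNReal.ofReal (|u (x + 0) - u x| / ‖(0:EuclideanSpace ℝ (Fin N))‖ ^ p) = 0 := by
        intro x
        simp [Real.zero_rpow hp0.ne']
      simp only [hz, lintegral_zero]
      exact zero_le
    · have hc : 0 < ‖h‖ ^ p := Real.rpow_pos_of_pos (norm_pos_iff.2 hh) p
      calc ∫⁻ x, ENNReal.ofReal (|u (x + h) - u x| / ‖h‖ ^ p)
          = ∫⁻ x, ENNReal.ofReal |u (x + h) - u x| * (ENNReal.ofReal (‖h‖ ^ p))⁻¹ := by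
            refine lintegral_congr fun x ↦ ?_
            rw [ENNReal.ofReal_div_of_pos hc, div_eq_mul_inv]
        _ = (∫⁻ x, ENNReal.ofReal |u (x + h) - u x|) * (ENNReal.ofReal (‖h‖ ^ p))⁻¹ :=
            lintegral_mul_const' _ _ (ENNReal.inv_ne_top.2 (ENNReal.ofReal_pos.2 hc).ne')
        _ ≤ ENNReal.ofReal (min (A * ‖h‖) (2 * B)) * (ENNReal.ofReal (‖h‖ ^ p))⁻¹ := by
            gcongr
            rcases min_cases (A * ‖h‖) (2 * B) with ⟨hmin, _⟩ | ⟨hmin, _⟩ <;> rw [hmin]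
            · exact aux_grad_bound u hu hcs h
            · exact aux_u_bound u hu hcs h
        _ = ENNReal.ofReal (min (A * ‖h‖) (2 * B) / ‖h‖ ^ p) := by
            rw [ENNReal.ofReal_div_of_pos hc, div_eq_mul_inv]
  -- degenerate cases
  rcases eq_or_lt_of_le hA0 with hA | hA
  · refine le_trans step1 (le_trans (le_of_eq ?_) zero_le)
    have hz : ∀ h : EuclideanSpace ℝ (Fin N),
        ENNReal.ofReal (min (A * ‖h‖) (2 * B) / ‖h‖ ^ p) = 0 := by
      intro h
      have : min (A * ‖h‖) (2 * B) = 0 := by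
        rw [← hA, zero_mul]
        exact min_eq_left (by positivity)
      rw [this]; simp
    simp only [hz, lintegral_zero]
  rcases eq_or_lt_of_le hB0 with hB | hB
  · refine le_trans step1 (le_trans (le_of_eq ?_) zero_le)
    have hz : ∀ h : EuclideanSpace ℝ (Fin N),
        ENNReal.ofReal (min (A * ‖h‖) (2 * B) / ‖h‖ ^ p) = 0 := by
      intro h
      have : min (A * ‖h‖) (2 * B) = 0 := by
        rw [← hB, mul_zero]
        exact min_eq_right (by positivity)
      rw [this]; simp
    simp only [hz, lintegral_zero]
  -- nondegenerate case
  haveI : Nontrivial (EuclideanSpace ℝ (Fin N)) := Module.nontrivial_of_finrank_pos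
    (R := ℝ) (by rw [finrank_euclideanSpace_fin]; exact hN)
  set r : ℝ := 2 * B / A with hr_def
  have hr : 0 < r := by positivity
  set g : ℝ → ℝ≥0∞ := fun y ↦ ENNReal.ofReal (min (A * y) (2 * B) / y ^ p) with hg_def
  have hg_meas : Measurable g :=
    (((measurable_const.mul measurable_id).min measurable_const).div
      (measurable_id.pow measurable_const)).ennreal_ofReal
  have polar : ∫⁻ h : EuclideanSpace ℝ (Fin N),
      ENNReal.ofReal (min (A * ‖h‖) (2 * B) / ‖h‖ ^ p) =
      (N : ℝ≥0∞) * volume (ball (0 : EuclideanSpace ℝ (Fin N)) 1) *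
        ∫⁻ y in Ioi (0 : ℝ), ENNReal.ofReal (y ^ (N - 1)) * g y := by
    have := lintegral_fun_norm_addHaar' (volume : Measure (EuclideanSpace ℝ (Fin N))) g hg_meas
    rw [finrank_euclideanSpace_fin] at this
    exact this
  have hyN1 : ∀ y : ℝ, 0 < y → (y:ℝ) ^ (N-1) = y ^ ((N:ℝ)-1) := by
    intro y hy
    rw [← Real.rpow_natCast y (N-1)]
    congr 1
    push_cast [Nat.cast_sub hN]
    ring
  -- first piece
  have key1 : ∫⁻ y in Ioc (0:ℝ) r, ENNReal.ofReal (y ^ (N-1)) * g y ≤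
      ENNReal.ofReal (A * (r ^ (1-s) / (1-s))) := by
    have hintg : IntegrableOn (fun y : ℝ ↦ A * y ^ (-s)) (Ioc 0 r) :=
      ((intervalIntegral.intervalIntegrable_rpow' (by linarith : (-1:ℝ) < -s)).1).const_mul A
    calc ∫⁻ y in Ioc (0:ℝ) r, ENNReal.ofReal (y ^ (N-1)) * g y
        ≤ ∫⁻ y in Ioc (0:ℝ) r, ENNReal.ofReal (A * y ^ (-s)) := by
          refine setLIntegral_mono
            ((measurable_const.mul (measurable_id.pow measurable_const)).ennreal_ofReal)
            fun y hy ↦ ?_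
          obtain ⟨hy0, -⟩ := hy
          rw [hg_def, ← ENNReal.ofReal_mul (by positivity)]
          apply ENNReal.ofReal_le_ofReal
          calc (y:ℝ) ^ (N-1) * (min (A * y) (2 * B) / y ^ p)
              ≤ (y:ℝ) ^ (N-1) * ((A * y) / y ^ p) := by
                gcongr
                exact min_le_left _ _
            _ = A * ((y ^ (N-1) * y) / y ^ p) := by ring
            _ = A * (y ^ ((N:ℝ)) / y ^ p) := by
                rw [hyN1 y hy0, ← Real.rpow_add_one hy0.ne']
                norm_num
            _ = A * y ^ ((N:ℝ) - p) := by rw [Real.rpow_sub hy0]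
            _ = A * y ^ (-s) := by
                congr 1
                rw [hp_def]
                ring
      _ = ENNReal.ofReal (∫ y in Ioc (0:ℝ) r, A * y ^ (-s)) := by
          rw [ofReal_integral_eq_lintegral_ofReal hintg]
          filter_upwards [ae_restrict_mem measurableSet_Ioc] with y hy
          have hy0 := hy.1
          positivity
      _ = ENNReal.ofReal (A * (r ^ (1-s) / (1-s))) := by
          congr 1
          rw [← intervalIntegral.integral_of_le hr.le,
            intervalIntegral.integral_const_mul, integral_rpow (Or.inl (by linarith)),
            Real.zero_rpow (by linarith : -s + 1 ≠ 0)]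
          have : -s + 1 = 1 - s := by ring
          rw [this]
          ring
  -- second piece
  have key2 : ∫⁻ y in Ioi r, ENNReal.ofReal (y ^ (N-1)) * g y ≤
      ENNReal.ofReal (2 * B * (r ^ (-s) / s)) := by
    have hintg : IntegrableOn (fun y : ℝ ↦ 2 * B * y ^ (-1-s)) (Ioi r) :=
      (integrableOn_Ioi_rpow_of_lt (by linarith) hr).const_mul (2*B)
    calc ∫⁻ y in Ioi r, ENNReal.ofReal (y ^ (N-1)) * g y
        ≤ ∫⁻ y in Ioi r, ENNReal.ofReal (2 * B * y ^ (-1-s)) := by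
          refine setLIntegral_mono
            ((measurable_const.mul (measurable_id.pow measurable_const)).ennreal_ofReal)
            fun y hy ↦ ?_
          have hy0 : 0 < y := hr.trans hy
          rw [hg_def, ← ENNReal.ofReal_mul (by positivity)]
          apply ENNReal.ofReal_le_ofReal
          calc (y:ℝ) ^ (N-1) * (min (A * y) (2 * B) / y ^ p)
              ≤ (y:ℝ) ^ (N-1) * ((2 * B) / y ^ p) := by
                gcongr
                exact min_le_right _ _
            _ = 2 * B * (y ^ ((N:ℝ)-1) / y ^ p) := by rw [hyN1 y hy0]; ring
            _ = 2 * B * y ^ (((N:ℝ)-1) - p) := by rw [← Real.rpow_sub hy0]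
            _ = 2 * B * y ^ (-1-s) := by
                congr 1
                rw [hp_def]
                ring
      _ = ENNReal.ofReal (∫ y in Ioi r, 2 * B * y ^ (-1-s)) := by
          rw [ofReal_integral_eq_lintegral_ofReal hintg]
          filter_upwards [ae_restrict_mem measurableSet_Ioi] with y hy
          have hy0 : 0 < y := hr.trans hy
          positivity
      _ = ENNReal.ofReal (2 * B * (r ^ (-s) / s)) := by
          congr 1
          rw [MeasureTheory.integral_const_mul, integral_Ioi_rpow_of_lt (by linarith) hr]
          have h1 : (-1:ℝ) - s + 1 = -s := by ring
          rw [h1, neg_div_neg_eq]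
  -- combine
  have Ssplit : ∫⁻ y in Ioi (0:ℝ), ENNReal.ofReal (y ^ (N-1)) * g y ≤
      ENNReal.ofReal (A * (r ^ (1-s) / (1-s))) + ENNReal.ofReal (2 * B * (r ^ (-s) / s)) := by
    rw [show Ioi (0:ℝ) = Ioc 0 r ∪ Ioi r from (Ioc_union_Ioi_eq_Ioi hr.le).symm,
      lintegral_union measurableSet_Ioi Ioc_disjoint_Ioi_same]
    exact add_le_add key1 key2
  refine le_trans step1 ?_
  rw [polar]
  refine le_trans (mul_le_mul_right Ssplit _) (le_of_eq ?_)
  have hc1 : (0:ℝ) ≤ A * (r ^ (1-s) / (1-s)) :=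
    mul_nonneg hA.le (div_nonneg (Real.rpow_nonneg hr.le _) (by linarith))
  have hc2 : (0:ℝ) ≤ 2 * B * (r ^ (-s) / s) :=
    mul_nonneg (by linarith) (div_nonneg (Real.rpow_nonneg hr.le _) hs0.le)
  rw [← ENNReal.ofReal_add hc1 hc2,
    show ((N:ℝ≥0∞) * volume (ball (0 : EuclideanSpace ℝ (Fin N)) 1)) =
      ENNReal.ofReal ((N:ℝ) * (volume (ball (0 : EuclideanSpace ℝ (Fin N)) 1)).toReal) by
      rw [ENNReal.ofReal_mul (Nat.cast_nonneg N), ENNReal.ofReal_natCast,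
        ENNReal.ofReal_toReal measure_ball_lt_top.ne],
    ← ENNReal.ofReal_mul (by positivity)]
  congr 1
  rw [aux_calc hA hB hs0 hs1]
  ring
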